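/- Let a ∈ A and let u, v ∈ π^{-1}(a) with v ≠ u. If min(u,v) is a maximal element, with respect to the componentwise partial order on ℕ^r (i.e. with respect to divisibility of the corresponding monomials gcd(X^u, X^w)), of the set { min(u,w) : w ∈ π^{-1}(a), w ≠ u }, then the monomial X^{u − min(u,v)} is an indispensable monomial of I_A. -/

import Mathlib

open MvPolynomial

/-- The monomial `X^u = ∏ i, X i ^ u i` in `k[X_1, …, X_r]`. -/
noncomputable def mon (k : Type*) [Field k] {r : ℕ} (u : Fin r → ℕ) :
    MvPolynomial (Fin r) k :=
  ∏ i, X i ^ u i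


lemma coe_sym {r : ℕ} (u : Fin r → ℕ) (i : Fin r) :
    (Finsupp.equivFunOnFinite.symm u) i = u i := by
  simp [Finsupp.equivFunOnFinite]
  rfl

lemma mon_eq_monomial (k : Type*) [Field k] {r : ℕ} (u : Fin r → ℕ) :
    mon k u = monomial (Finsupp.equivFunOnFinite.symm u) 1 := by
  rw [← prod_X_pow_eq_monomial, mon]
  simp only [coe_sym]
  refine (Finset.prod_subset (Finset.subset_univ _) ?_).symm
  intro i _ hi
  have h0 : u i = 0 := by
    have := Finsupp.notMem_support_iff.mp hi
    rwa [coe_sym] at this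
  simp [h0]

/-- `S` is a binomial generating set of `IA`: a set of pure-difference binomials
`X^u - X^v` with `π u = π v` generating `IA` as an ideal. -/
def IsBinomGenSet (k : Type*) [Field k] {r : ℕ} {A : Type*} [AddCancelCommMonoid A]
    (π : (Fin r → ℕ) → A) (IA : Ideal (MvPolynomial (Fin r) k))
    (S : Set (MvPolynomial (Fin r) k)) : Prop :=
  (∀ f ∈ S, ∃ u v : Fin r → ℕ, π u = π v ∧ f = mon k u - mon k v) ∧ Ideal.span S = IA

/-- A minimal binomial generating set: no proper subset generates `IA`. -/
def IsMinBinomGenSet (k : Type*) [Field k] {r : ℕ} {A : Type*} [AddCancelCommMonoid A]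
    (π : (Fin r → ℕ) → A) (IA : Ideal (MvPolynomial (Fin r) k))
    (S : Set (MvPolynomial (Fin r) k)) : Prop :=
  IsBinomGenSet k π IA S ∧ ∀ T, T ⊂ S → Ideal.span T ≠ IA

/-- `f` is an indispensable binomial of `IA`: a binomial `X^u - X^v ∈ IA` with `u ≠ v`
such that every binomial generating set of `IA` contains `f` or `-f`. -/
def IsIndispBinomial (k : Type*) [Field k] {r : ℕ} {A : Type*} [AddCancelCommMonoid A]
    (π : (Fin r → ℕ) → A) (IA : Ideal (MvPolynomial (Fin r) k))
    (f : MvPolynomial (Fin r) k) : Prop :=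
  (∃ u v : Fin r → ℕ, u ≠ v ∧ π u = π v ∧ f = mon k u - mon k v) ∧ f ∈ IA ∧
    ∀ S, IsBinomGenSet k π IA S → f ∈ S ∨ -f ∈ S

/-- `X^u` is an indispensable monomial of `IA`: every binomial generating set of `IA`
contains a binomial `X^u - X^v` or `X^v - X^u` for some `v`. -/
def IsIndispMonomial (k : Type*) [Field k] {r : ℕ} {A : Type*} [AddCancelCommMonoid A]
    (π : (Fin r → ℕ) → A) (IA : Ideal (MvPolynomial (Fin r) k))
    (u : Fin r → ℕ) : Prop :=
  ∀ S, IsBinomGenSet k π IA S →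
    ∃ f ∈ S, ∃ v : Fin r → ℕ, f = mon k u - mon k v ∨ f = mon k v - mon k u

/-- `S` is an `A`-homogeneous generating set of `IA`: a set of `A`-homogeneous
polynomials generating `IA` as an ideal. -/
def IsHomogGenSet (k : Type*) [Field k] {r : ℕ} {A : Type*} [AddCancelCommMonoid A]
    (π : (Fin r → ℕ) → A) (IA : Ideal (MvPolynomial (Fin r) k))
    (S : Set (MvPolynomial (Fin r) k)) : Prop :=
  (∀ f ∈ S, ∃ b : A, ∀ d ∈ f.support, π ⇑d = b) ∧ Ideal.span S = IA

/-- A minimal `A`-homogeneous generating set: no proper subset generates `IA`. -/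
def IsMinHomogGenSet (k : Type*) [Field k] {r : ℕ} {A : Type*} [AddCancelCommMonoid A]
    (π : (Fin r → ℕ) → A) (IA : Ideal (MvPolynomial (Fin r) k))
    (S : Set (MvPolynomial (Fin r) k)) : Prop :=
  IsHomogGenSet k π IA S ∧ ∀ T, T ⊂ S → Ideal.span T ≠ IA

/-- `b` is an indispensable `A`-degree of `IA`: every binomial generating set of `IA`
contains a binomial both of whose monomials have `A`-degree `b`, and every minimal
binomial generating set contains exactly one such binomial. -/
def IsIndispDegree (k : Type*) [Field k] {r : ℕ} {A : Type*} [AddCancelCommMonoid A]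
    (π : (Fin r → ℕ) → A) (IA : Ideal (MvPolynomial (Fin r) k)) (b : A) : Prop :=
  (∀ S, IsBinomGenSet k π IA S →
    ∃ f ∈ S, ∃ u v : Fin r → ℕ, π u = b ∧ π v = b ∧ f = mon k u - mon k v) ∧
  ∀ S, IsMinBinomGenSet k π IA S →
    ∃! f, f ∈ S ∧ ∃ u v : Fin r → ℕ, π u = b ∧ π v = b ∧ f = mon k u - mon k v

/-- If `u, v ∈ π⁻¹(b)` with `v ≠ u` and `min(u,v)` is a maximal element (for the
componentwise order) of `{min(u,w) : w ∈ π⁻¹(b), w ≠ u}`, then `X^{u − min(u,v)}`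
is an indispensable monomial of `I_A`. -/
theorem statement_7 {k : Type*} [Field k] {r : ℕ} (hr : 1 ≤ r)
    {A : Type*} [AddCancelCommMonoid A]
    (hred : ∀ x y : A, x + y = 0 → x = 0 ∧ y = 0)
    (a : Fin r → A) (ha : ∀ i, a i ≠ 0)
    (π : (Fin r → ℕ) → A) (hπ : ∀ u, π u = ∑ i, u i • a i)
    (hgen : ∀ x : A, ∃ u, π u = x)
    (hfib : ∀ x : A, {u : Fin r → ℕ | π u = x}.Finite)
    (IA : Ideal (MvPolynomial (Fin r) k))
    (hIA : IA = Ideal.span {f | ∃ u v : Fin r → ℕ, π u = π v ∧ f = mon k u - mon k v})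
    (b : A) (u v : Fin r → ℕ) (hu : π u = b) (hv : π v = b) (hvu : v ≠ u)
    (hmax : ∀ w : Fin r → ℕ, π w = b → w ≠ u →
      (∀ i, min (u i) (v i) ≤ min (u i) (w i)) →
      ∀ i, min (u i) (v i) = min (u i) (w i)) :
    IsIndispMonomial k π IA (fun i => u i - min (u i) (v i)) := by
    classical
  intro S hS
  set u' : Fin r → ℕ := fun i => u i - min (u i) (v i) with hu'
  set v' : Fin r → ℕ := fun i => v i - min (u i) (v i) with hv'
  set m : Fin r → ℕ := fun i => min (u i) (v i) with hm
  have hadd : ∀ x y : Fin r → ℕ, π (x + y) = π x + π y := by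
    intro x y
    simp [hπ, add_smul, Finset.sum_add_distrib]
  have hum : u' + m = u := by funext i; simp only [Pi.add_apply, hu', hm]; omega
  have hvm : v' + m = v := by funext i; simp only [Pi.add_apply, hv', hm]; omega
  have hπuv : π u' = π v' := by
    have h1 : π u' + π m = π v' + π m := by
      rw [← hadd, ← hadd, hum, hvm, hu, hv]
    exact add_right_cancel h1
  have key : ∀ p q : Fin r → ℕ, π p = π q → p ≠ q → (∀ i, p i ≤ u' i) → p = u' := by
    intro p q hpq hne hle
    set w : Fin r → ℕ := fun i => u' i - p i + q i + m i with hw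
    have hπw : π w = b := by
      have h1 : w = ((fun i => u' i - p i) + q) + m := by
        funext i; simp [hw]
      have h2 : (fun i => u' i - p i) + p = u' := by
        funext i; simp only [Pi.add_apply]; have := hle i; omega
      rw [h1, hadd, hadd, ← hpq, ← hadd, h2, ← hadd, hum, hu]
    have hwu : w ≠ u := by
      intro h
      apply hne
      funext i
      have h1 := congrFun h i
      have h2 := congrFun hum i
      have h3 := hle i
      simp only [Pi.add_apply, hw] at h1 h2
      omega
    have h1 : ∀ i, min (u i) (v i) ≤ min (u i) (w i) := by
      intro i
      have h2 := congrFun hum i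
      have h3 := hle i
      simp only [Pi.add_apply, hw, hu', hm] at *
      omega
    have h2 := hmax w hπw hwu h1
    funext i
    have h2i := h2 i
    have h3 := congrFun hum i
    have h4 := hle i
    simp only [Pi.add_apply, hw, hu', hm] at *
    omega
  have huv' : u' ≠ v' := by
    intro h
    apply hvu
    funext i
    have h1 := congrFun h i
    simp only [hu', hv'] at h1
    omega
  set E : Set (Fin r →₀ ℕ) :=
    {d | ∃ f ∈ S, ∃ p q : Fin r → ℕ, π p = π q ∧ p ≠ q ∧ f = mon k p - mon k q ∧
      (d = Finsupp.equivFunOnFinite.symm p ∨ d = Finsupp.equivFunOnFinite.symm q)} with hE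
  have hSsub : S ⊆ (Ideal.span ((fun s => monomial s (1 : k)) '' E) : Ideal (MvPolynomial (Fin r) k)) := by
    intro f hf
    obtain ⟨p, q, hpq, hfeq⟩ := hS.1 f hf
    by_cases hpq' : p = q
    · have : f = 0 := by rw [hfeq, hpq', sub_self]
      rw [this]
      exact zero_mem _
    · have hp : monomial (Finsupp.equivFunOnFinite.symm p) (1 : k) ∈
          Ideal.span ((fun s => monomial s (1 : k)) '' E) :=
        Ideal.subset_span ⟨_, ⟨f, hf, p, q, hpq, hpq', hfeq, Or.inl rfl⟩, rfl⟩
      have hq : monomial (Finsupp.equivFunOnFinite.symm q) (1 : k) ∈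
          Ideal.span ((fun s => monomial s (1 : k)) '' E) :=
        Ideal.subset_span ⟨_, ⟨f, hf, p, q, hpq, hpq', hfeq, Or.inr rfl⟩, rfl⟩
      have : f = monomial (Finsupp.equivFunOnFinite.symm p) 1 -
          monomial (Finsupp.equivFunOnFinite.symm q) 1 := by
        rw [hfeq, mon_eq_monomial, mon_eq_monomial]
      rw [this]
      exact sub_mem hp hq
  have hg : mon k u' - mon k v' ∈ Ideal.span ((fun s => monomial s (1 : k)) '' E) := by
    apply Ideal.span_le.mpr hSsub
    rw [hS.2, hIA]
    exact Ideal.subset_span ⟨u', v', hπuv, rfl⟩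
  have hne' : Finsupp.equivFunOnFinite.symm v' ≠ Finsupp.equivFunOnFinite.symm u' := by
    intro h
    exact huv' (Finsupp.equivFunOnFinite.symm.injective h).symm
  have hsupp : Finsupp.equivFunOnFinite.symm u' ∈ (mon k u' - mon k v').support := by
    rw [mon_eq_monomial, mon_eq_monomial, mem_support_iff]
    simp [coeff_monomial, hne']
  obtain ⟨s, hsE, hsle⟩ := mem_ideal_span_monomial_image.mp hg _ hsupp
  obtain ⟨f, hfS, p, q, hpq, hne, hfeq, hd⟩ := hsE
  have hcomp : ∀ x : Fin r → ℕ, s = Finsupp.equivFunOnFinite.symm x → ∀ i, x i ≤ u' i := by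
    intro x hx i
    have h1 := Finsupp.le_def.mp hsle i
    rw [hx] at h1
    rwa [coe_sym, coe_sym] at h1
  rcases hd with hd | hd
  · have hp : p = u' := key p q hpq hne (hcomp p hd)
    exact ⟨f, hfS, q, Or.inl (by rw [hfeq, hp])⟩
  · have hq : q = u' := key q p hpq.symm (Ne.symm hne) (hcomp q hd)
    exact ⟨f, hfS, p, Or.inr (by rw [hfeq, hq])⟩
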